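/- Consistency of conversion: in the dependent type theory described, the two canonical Booleans are not judgmentally convertible; that is, the judgement () ⊢ 0 conv 1 : N₂ is not derivable. -/

import Mathlib

/-!
Martin-Löf dependent type theory with conversion as a judgement:
cumulative universes `U₀ : U₁ : …`, dependent products with β- and η-conversion,
and Booleans `N₂` with `0`, `1` and the eliminator `brec`.
Terms are in de Bruijn representation (so α-equivalent terms are equal).
-/

namespace DTT

/-- Raw terms (de Bruijn indices).  In `pi A B`, `lam A t` and `brec C a₀ a₁`
the second (resp. first) argument `B`, `t`, `C` binds one variable. -/
inductive Tm : Type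
  | var : Nat → Tm
  | pi : Tm → Tm → Tm
  | lam : Tm → Tm → Tm
  | app : Tm → Tm → Tm
  | univ : Nat → Tm
  | bool : Tm
  | zero : Tm
  | one : Tm
  | brec : Tm → Tm → Tm → Tm
  deriving DecidableEq

/-- Shift by one the free variables `≥ d`. -/
def lift (d : Nat) : Tm → Tm
  | .var k => if k < d then .var k else .var (k + 1)
  | .pi A B => .pi (lift d A) (lift (d + 1) B)
  | .lam A t => .lam (lift d A) (lift (d + 1) t)
  | .app t u => .app (lift d t) (lift d u)
  | .univ n => .univ n
  | .bool => .bool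
  | .zero => .zero
  | .one => .one
  | .brec C a b => .brec (lift (d + 1) C) (lift d a) (lift d b)

/-- Shift all free variables up by `n`. -/
def shiftN (n : Nat) (t : Tm) : Tm := (lift 0)^[n] t

/-- Substitute `u` for the variable `d` (lowering the variables above `d`). -/
def subst (d : Nat) (u : Tm) : Tm → Tm
  | .var k => if k < d then .var k else if k = d then shiftN d u else .var (k - 1)
  | .pi A B => .pi (subst d u A) (subst (d + 1) u B)
  | .lam A t => .lam (subst d u A) (subst (d + 1) u t)
  | .app t v => .app (subst d u t) (subst d u v)
  | .univ n => .univ n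
  | .bool => .bool
  | .zero => .zero
  | .one => .one
  | .brec C a b => .brec (subst (d + 1) u C) (subst d u a) (subst d u b)

/-- `B(u)` : substitution for the last bound variable. -/
abbrev subst0 (B u : Tm) : Tm := subst 0 u B

/-- A context is a list of types, most recent binding first. -/
abbrev Ctx := List Tm

mutual
  /-- Well-formed contexts `Γ ⊢`. -/
  inductive WfCtx : Ctx → Prop
    | nil : WfCtx []
    | cons {Γ A n} : HasType Γ A (.univ n) → WfCtx (A :: Γ)

  /-- The typing judgement `Γ ⊢ t : A`. -/
  inductive HasType : Ctx → Tm → Tm → Prop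
    | var {Γ x A} : WfCtx Γ → Γ[x]? = some A →
        HasType Γ (.var x) (shiftN (x + 1) A)
    | pi {Γ A B n} : HasType Γ A (.univ n) → HasType (A :: Γ) B (.univ n) →
        HasType Γ (.pi A B) (.univ n)
    | lam {Γ A t B} : HasType (A :: Γ) t B →
        HasType Γ (.lam A t) (.pi A B)
    | app {Γ t u A B} : HasType Γ t (.pi A B) → HasType Γ u A →
        HasType Γ (.app t u) (subst0 B u)
    | cumul {Γ A n m} : HasType Γ A (.univ n) → n ≤ m → HasType Γ A (.univ m)
    | univ {Γ n m} : WfCtx Γ → n < m → HasType Γ (.univ n) (.univ m)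
    | bool {Γ n} : WfCtx Γ → HasType Γ .bool (.univ n)
    | zero {Γ} : WfCtx Γ → HasType Γ .zero .bool
    | one {Γ} : WfCtx Γ → HasType Γ .one .bool
    | brec {Γ C a₀ a₁ n} : HasType (.bool :: Γ) C (.univ n) →
        HasType Γ a₀ (subst0 C .zero) → HasType Γ a₁ (subst0 C .one) →
        HasType Γ (.brec C a₀ a₁) (.pi .bool C)
    | conv {Γ t A B n} : HasType Γ t A → Conv Γ A B (.univ n) → HasType Γ t B

  /-- The conversion judgement `Γ ⊢ t conv u : A`. -/
  inductive Conv : Ctx → Tm → Tm → Tm → Prop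
    | refl {Γ t A} : HasType Γ t A → Conv Γ t t A
    | euclid {Γ t u v A} : Conv Γ t v A → Conv Γ u v A → Conv Γ t u A
    | convTy {Γ t u A B n} : Conv Γ t u A → Conv Γ A B (.univ n) → Conv Γ t u B
    | cumul {Γ A B n m} : Conv Γ A B (.univ n) → n ≤ m → Conv Γ A B (.univ m)
    | piCong {Γ A₀ A₁ B₀ B₁ n} : Conv Γ A₀ A₁ (.univ n) →
        Conv (A₀ :: Γ) B₀ B₁ (.univ n) →
        Conv Γ (.pi A₀ B₀) (.pi A₁ B₁) (.univ n)
    | lamCong {Γ A₀ A₁ t₀ t₁ B n} : Conv Γ A₀ A₁ (.univ n) →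
        Conv (A₀ :: Γ) t₀ t₁ B →
        Conv Γ (.lam A₀ t₀) (.lam A₁ t₁) (.pi A₀ B)
    | appLeft {Γ t t' u A B} : Conv Γ t t' (.pi A B) → HasType Γ u A →
        Conv Γ (.app t u) (.app t' u) (subst0 B u)
    | appRight {Γ t u u' A B} : HasType Γ t (.pi A B) → Conv Γ u u' A →
        Conv Γ (.app t u) (.app t u') (subst0 B u)
    | beta {Γ A t B u} : HasType (A :: Γ) t B → HasType Γ u A →
        Conv Γ (.app (.lam A t) u) (subst0 t u) (subst0 B u)
    | eta {Γ t u A B} : HasType Γ t (.pi A B) → HasType Γ u (.pi A B) →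
        Conv (A :: Γ) (.app (lift 0 t) (.var 0)) (.app (lift 0 u) (.var 0)) B →
        Conv Γ t u (.pi A B)
    | brecCong {Γ C C' a₀ a₀' a₁ a₁' n} : Conv (.bool :: Γ) C C' (.univ n) →
        Conv Γ a₀ a₀' (subst0 C .zero) → Conv Γ a₁ a₁' (subst0 C .one) →
        Conv Γ (.brec C a₀ a₁) (.brec C' a₀' a₁') (.pi .bool C)
    | brecZero {Γ C a₀ a₁ n} : HasType (.bool :: Γ) C (.univ n) →
        HasType Γ a₀ (subst0 C .zero) → HasType Γ a₁ (subst0 C .one) →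
        Conv Γ (.app (.brec C a₀ a₁) .zero) a₀ (subst0 C .zero)
    | brecOne {Γ C a₀ a₁ n} : HasType (.bool :: Γ) C (.univ n) →
        HasType Γ a₀ (subst0 C .zero) → HasType Γ a₁ (subst0 C .one) →
        Conv Γ (.app (.brec C a₀ a₁) .one) a₁ (subst0 C .one)
end

mutual
  /-- Neutral terms. -/
  inductive Neutral : Tm → Prop
    | var (x) : Neutral (.var x)
    | app {k u} : Neutral k → Normal u → Neutral (.app k u)
    | brec {C a₀ a₁ k} : Normal C → Normal a₀ → Normal a₁ → Neutral k →
        Neutral (.app (.brec C a₀ a₁) k)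

  /-- Normal terms. -/
  inductive Normal : Tm → Prop
    | neutral {k} : Neutral k → Normal k
    | zero : Normal .zero
    | one : Normal .one
    | bool : Normal .bool
    | univ (n) : Normal (.univ n)
    | lam {A t} : Normal A → Normal t → Normal (.lam A t)
    | pi {A B} : Normal A → Normal B → Normal (.pi A B)
end

end DTT
namespace ZNC

inductive U : Type
  | var : Nat → U
  | pi : U → U → U
  | lam : U → U
  | app : U → U → U
  | univ : Nat → U
  | bool : U
  | zero : U
  | one : U
  | brc : U → U → U

namespace U

def ulift (d : Nat) : U → U
  | var k => if k < d then var k else var (k+1)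
  | pi A B => pi (ulift d A) (ulift (d+1) B)
  | lam t => lam (ulift (d+1) t)
  | app t u => app (ulift d t) (ulift d u)
  | univ n => univ n
  | bool => bool
  | zero => zero
  | one => one
  | brc a b => brc (ulift d a) (ulift d b)

def shN (n : Nat) (t : U) : U := (ulift 0)^[n] t

def usub (d : Nat) (u : U) : U → U
  | var k => if k < d then var k else if k = d then shN d u else var (k-1)
  | pi A B => pi (usub d u A) (usub (d+1) u B)
  | lam t => lam (usub (d+1) u t)
  | app t v => app (usub d u t) (usub d u v)
  | univ n => univ n
  | bool => bool
  | zero => zero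
  | one => one
  | brc a b => brc (usub d u a) (usub d u b)

theorem shN_zero (t : U) : shN 0 t = t := rfl

theorem shN_succ (n : Nat) (t : U) : shN (n+1) t = ulift 0 (shN n t) :=
  Function.iterate_succ_apply' _ _ _

theorem shN_var0 (d : Nat) : shN d (var 0) = var d := by
  induction d with
  | zero => rfl
  | succ d ih => rw [shN_succ, ih]; simp [ulift]

theorem lift_lift (t : U) : ∀ d e, e ≤ d → ulift (d+1) (ulift e t) = ulift e (ulift d t) := by
  induction t with
  | var k =>
    intro d e h
    by_cases h1 : k < e
    · simp only [ulift, if_pos h1, if_pos (show k < d by omega), if_pos (show k < d+1 by omega)]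
    · by_cases h2 : k < d
      · simp only [ulift, if_neg h1, if_pos h2, if_pos (show k+1 < d+1 by omega),
          if_neg (show ¬ k < e by omega)]
      · simp only [ulift, if_neg h1, if_neg h2, if_neg (show ¬ k+1 < d+1 by omega),
          if_neg (show ¬ k+1 < e by omega)]
  | pi A B ihA ihB => intro d e h; simp only [ulift]; rw [ihA _ _ h, ihB _ _ (by omega)]
  | lam t ih => intro d e h; simp only [ulift]; rw [ih _ _ (by omega)]
  | app t u iht ihu => intro d e h; simp only [ulift]; rw [iht _ _ h, ihu _ _ h]
  | univ n => intros; rfl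
  | bool => intros; rfl
  | zero => intros; rfl
  | one => intros; rfl
  | brc a b iha ihb => intro d e h; simp only [ulift]; rw [iha _ _ h, ihb _ _ h]

theorem lift_shN (v : U) : ∀ e d, d ≤ e → ulift d (shN e v) = shN (e+1) v := by
  intro e
  induction e with
  | zero => intro d h; interval_cases d; rw [shN_succ, shN_zero]
  | succ e ih =>
    intro d h
    match d, h with
    | 0, _ => rw [shN_succ (e+1)]
    | (d'+1), h =>
      rw [shN_succ, lift_lift _ _ _ (Nat.zero_le _), ih d' (by omega), ← shN_succ]

theorem lift_shN' (v : U) : ∀ e d, ulift (d+e) (shN e v) = shN e (ulift d v) := by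
  intro e
  induction e with
  | zero => intro d; rw [shN_zero, shN_zero]; simp
  | succ e ih =>
    intro d
    rw [shN_succ, show d+(e+1) = (d+e)+1 from rfl, lift_lift _ _ _ (Nat.zero_le _),
      ih, ← shN_succ]

theorem sub_lift (w : U) : ∀ d e u, e ≤ d → usub (d+1) u (ulift e w) = ulift e (usub d u w) := by
  induction w with
  | var k =>
    intro d e u h
    by_cases h1 : k < e
    · simp only [ulift, usub, if_pos h1, if_pos (show k < d by omega),
        if_pos (show k < d+1 by omega)]
    · by_cases h2 : k < d
      · simp only [ulift, usub, if_neg h1, if_pos h2, if_pos (show k+1 < d+1 by omega)]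
      · by_cases h3 : k = d
        · simp only [ulift, usub, if_neg h1, if_neg h2, if_neg (show ¬ k+1 < d+1 by omega),
            if_pos (show k+1 = d+1 by omega), if_pos h3]
          rw [lift_shN _ _ _ h]
        · simp only [ulift, usub, if_neg h1, if_neg h2, if_neg h3,
            if_neg (show ¬ k+1 < d+1 by omega), if_neg (show ¬ k+1 = d+1 by omega)]
          simp only [ulift, if_neg (show ¬ k-1 < e by omega)]
          congr 1
          omega
  | pi A B ihA ihB => intro d e u h; simp only [ulift, usub]; rw [ihA _ _ _ h, ihB _ _ _ (by omega)]
  | lam t ih => intro d e u h; simp only [ulift, usub]; rw [ih _ _ _ (by omega)]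
  | app t v iht ihv => intro d e u h; simp only [ulift, usub]; rw [iht _ _ _ h, ihv _ _ _ h]
  | univ n => intros; rfl
  | bool => intros; rfl
  | zero => intros; rfl
  | one => intros; rfl
  | brc a b iha ihb => intro d e u h; simp only [ulift, usub]; rw [iha _ _ _ h, ihb _ _ _ h]

theorem sub_shN (v : U) : ∀ e d u, usub (d+e) u (shN e v) = shN e (usub d u v) := by
  intro e
  induction e with
  | zero => intro d u; rw [shN_zero, shN_zero, Nat.add_zero]
  | succ e ih =>
    intro d u
    rw [shN_succ, show d+(e+1) = (d+e)+1 from rfl, sub_lift _ _ _ _ (Nat.zero_le _),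
      ih, ← shN_succ]

theorem sub_lift_cancel (s : U) : ∀ e u, usub e u (ulift e s) = s := by
  induction s with
  | var k =>
    intro e u
    by_cases h1 : k < e
    · simp only [ulift, usub, if_pos h1]
    · simp only [ulift, usub, if_neg h1, if_neg (show ¬ k+1 < e by omega),
        if_neg (show ¬ k+1 = e by omega), Nat.add_sub_cancel]
  | pi A B ihA ihB => intro e u; simp only [ulift, usub]; rw [ihA, ihB]
  | lam t ih => intro e u; simp only [ulift, usub]; rw [ih]
  | app t v iht ihv => intro e u; simp only [ulift, usub]; rw [iht, ihv]
  | univ n => intros; rfl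
  | bool => intros; rfl
  | zero => intros; rfl
  | one => intros; rfl
  | brc a b iha ihb => intro e u; simp only [ulift, usub]; rw [iha, ihb]

theorem lift_sub (t : U) : ∀ d e v, ulift (d+e) (usub e v t) = usub e (ulift d v) (ulift (d+e+1) t) := by
  induction t with
  | var k =>
    intro d e v
    by_cases h1 : k < e
    · simp only [ulift, usub, if_pos h1, if_pos (show k < d+e by omega),
        if_pos (show k < d+e+1 by omega)]
    · by_cases h2 : k = e
      · simp only [ulift, usub, if_pos h2, if_neg h1, if_pos (show k < d+e+1 by omega)]
        rw [lift_shN']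
      · by_cases h3 : k < d+e+1
        · simp only [ulift, usub, if_neg h1, if_neg h2, if_pos h3,
            if_pos (show k-1 < d+e by omega), if_neg (show ¬ k-1 < e by omega)]
        · simp only [ulift, usub, if_neg h1, if_neg h2, if_neg h3,
            if_neg (show ¬ k-1 < d+e by omega), if_neg (show ¬ k+1 < e by omega),
            if_neg (show ¬ k+1 = e by omega)]
          congr 1
          omega
  | pi A B ihA ihB =>
    intro d e v
    simp only [ulift, usub]
    rw [ihA, show d+e+1 = d+(e+1) from by omega, ihB]
  | lam t ih =>
    intro d e v
    simp only [ulift, usub]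
    rw [show d+e+1 = d+(e+1) from by omega, ih]
  | app t u iht ihu => intro d e v; simp only [ulift, usub]; rw [iht, ihu]
  | univ n => intros; rfl
  | bool => intros; rfl
  | zero => intros; rfl
  | one => intros; rfl
  | brc a b iha ihb => intro d e v; simp only [ulift, usub]; rw [iha, ihb]

theorem sub_sub (t : U) : ∀ d e u v, usub (d+e) u (usub e v t) = usub e (usub d u v) (usub (d+e+1) u t) := by
  induction t with
  | var k =>
    intro d e u v
    by_cases h1 : k < e
    · simp only [usub, if_pos h1, if_pos (show k < d+e by omega), if_pos (show k < d+e+1 by omega)]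
    · by_cases h2 : k = e
      · simp only [usub, if_pos h2, if_neg h1, if_pos (show k < d+e+1 by omega)]
        rw [sub_shN]
      · by_cases h3 : k < d+e+1
        · simp only [usub, if_neg h1, if_neg h2, if_pos h3, if_pos (show k-1 < d+e by omega)]
        · by_cases h4 : k = d+e+1
          · simp only [usub, if_neg h1, if_neg h2, if_neg h3, if_pos h4,
              if_neg (show ¬ k-1 < d+e by omega), if_pos (show k-1 = d+e by omega)]
            rw [← lift_shN u (d+e) e (by omega), sub_lift_cancel]
          · simp only [usub, if_neg h1, if_neg h2, if_neg h3, if_neg h4,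
              if_neg (show ¬ k-1 < d+e by omega), if_neg (show ¬ k-1 = d+e by omega),
              if_neg (show ¬ k-1 < e by omega), if_neg (show ¬ k-1 = e by omega)]
  | pi A B ihA ihB =>
    intro d e u v
    simp only [usub]
    rw [ihA, show d+e+1 = d+(e+1) from by omega, ihB]
  | lam t ih =>
    intro d e u v
    simp only [usub]
    rw [show d+e+1 = d+(e+1) from by omega, ih]
  | app t w iht ihw => intro d e u v; simp only [usub]; rw [iht, ihw]
  | univ n => intros; rfl
  | bool => intros; rfl
  | zero => intros; rfl
  | one => intros; rfl
  | brc a b iha ihb => intro d e u v; simp only [usub]; rw [iha, ihb]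

theorem sub_var0_lift (s : U) : ∀ d, usub d (var 0) (ulift (d+1) s) = s := by
  induction s with
  | var k =>
    intro d
    by_cases h1 : k < d
    · simp only [ulift, usub, if_pos (show k < d+1 by omega), if_pos h1]
    · by_cases h2 : k = d
      · simp only [ulift, usub, if_pos (show k < d+1 by omega), if_neg h1, if_pos h2, shN_var0]
        rw [h2]
      · simp only [ulift, usub, if_neg (show ¬ k < d+1 by omega), if_neg (show ¬ k+1 < d by omega),
          if_neg (show ¬ k+1 = d by omega), Nat.add_sub_cancel]
  | pi A B ihA ihB => intro d; simp only [ulift, usub]; rw [ihA, ihB]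
  | lam t ih => intro d; simp only [ulift, usub]; rw [ih]
  | app t v iht ihv => intro d; simp only [ulift, usub]; rw [iht, ihv]
  | univ n => intros; rfl
  | bool => intros; rfl
  | zero => intros; rfl
  | one => intros; rfl
  | brc a b iha ihb => intro d; simp only [ulift, usub]; rw [iha, ihb]

end U
end ZNC
namespace ZNC
namespace U

def usize : U → Nat
  | var _ => 1
  | univ _ => 1
  | bool => 1
  | zero => 1
  | one => 1
  | lam t => usize t + 1
  | pi a b => usize a + usize b + 1
  | app a b => usize a + usize b + 1
  | brc a b => usize a + usize b + 1

theorem usize_pos (t : U) : 0 < usize t := by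
  cases t <;> simp [usize]

theorem usize_lift (t : U) : ∀ d, usize (ulift d t) = usize t := by
  induction t with
  | var k => intro d; by_cases h : k < d <;> simp [ulift, h, usize]
  | pi A B ihA ihB => intro d; simp [ulift, usize, ihA, ihB]
  | lam t ih => intro d; simp [ulift, usize, ih]
  | app t u iht ihu => intro d; simp [ulift, usize, iht, ihu]
  | univ n => intro d; rfl
  | bool => intro d; rfl
  | zero => intro d; rfl
  | one => intro d; rfl
  | brc a b iha ihb => intro d; simp [ulift, usize, iha, ihb]

def unliftD (d : Nat) : U → Option U
  | var k => if k < d then some (var k) else if k = d then none else some (var (k-1))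
  | pi A B =>
    match unliftD d A, unliftD (d+1) B with
    | some A', some B' => some (pi A' B')
    | _, _ => none
  | lam t => (unliftD (d+1) t).map lam
  | app t u =>
    match unliftD d t, unliftD d u with
    | some a, some b => some (app a b)
    | _, _ => none
  | univ n => some (univ n)
  | bool => some bool
  | zero => some zero
  | one => some one
  | brc a b =>
    match unliftD d a, unliftD d b with
    | some x, some y => some (brc x y)
    | _, _ => none

theorem unliftD_lift (t : U) : ∀ d, unliftD d (ulift d t) = some t := by
  induction t with
  | var k =>
    intro d
    by_cases h : k < d
    · simp [ulift, unliftD, h]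
    · simp only [ulift, if_neg h, unliftD, if_neg (show ¬ k+1 < d by omega),
        if_neg (show ¬ k+1 = d by omega), Nat.add_sub_cancel]
  | pi A B ihA ihB => intro d; simp [ulift, unliftD, ihA, ihB]
  | lam t ih => intro d; simp [ulift, unliftD, ih]
  | app t u iht ihu => intro d; simp [ulift, unliftD, iht, ihu]
  | univ n => intro d; rfl
  | bool => intro d; rfl
  | zero => intro d; rfl
  | one => intro d; rfl
  | brc a b iha ihb => intro d; simp [ulift, unliftD, iha, ihb]

theorem unliftD_some (t : U) : ∀ d s, unliftD d t = some s → t = ulift d s := by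
  induction t with
  | var k =>
    intro d s h
    by_cases h1 : k < d
    · simp only [unliftD, if_pos h1, Option.some.injEq] at h
      subst h; simp [ulift, h1]
    · by_cases h2 : k = d
      · simp [unliftD, h1, h2] at h
      · simp only [unliftD, if_neg h1, if_neg h2, Option.some.injEq] at h
        subst h; simp only [ulift, if_neg (show ¬ k-1 < d by omega)]
        congr 1; omega
  | pi A B ihA ihB =>
    intro d s h
    simp only [unliftD] at h
    cases hA : unliftD d A with
    | none => rw [hA] at h; simp at h
    | some A' =>
      cases hB : unliftD (d+1) B with
      | none => rw [hA, hB] at h; simp at h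
      | some B' =>
        rw [hA, hB] at h; simp only [Option.some.injEq] at h
        subst h; simp [ulift, ihA _ _ hA, ihB _ _ hB]
  | lam t ih =>
    intro d s h
    simp only [unliftD] at h
    cases ht : unliftD (d+1) t with
    | none => rw [ht] at h; simp at h
    | some t' =>
      rw [ht] at h; simp only [Option.map_some, Option.some.injEq] at h
      subst h; simp [ulift, ih _ _ ht]
  | app t u iht ihu =>
    intro d s h
    simp only [unliftD] at h
    cases ht : unliftD d t with
    | none => rw [ht] at h; simp at h
    | some a =>
      cases hu : unliftD d u with
      | none => rw [ht, hu] at h; simp at h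
      | some b =>
        rw [ht, hu] at h; simp only [Option.some.injEq] at h
        subst h; simp [ulift, iht _ _ ht, ihu _ _ hu]
  | univ n => intro d s h; simp only [unliftD, Option.some.injEq] at h; subst h; rfl
  | bool => intro d s h; simp only [unliftD, Option.some.injEq] at h; subst h; rfl
  | zero => intro d s h; simp only [unliftD, Option.some.injEq] at h; subst h; rfl
  | one => intro d s h; simp only [unliftD, Option.some.injEq] at h; subst h; rfl
  | brc a b iha ihb =>
    intro d s h
    simp only [unliftD] at h
    cases ha : unliftD d a with
    | none => rw [ha] at h; simp at h
    | some x =>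
      cases hb : unliftD d b with
      | none => rw [ha, hb] at h; simp at h
      | some y =>
        rw [ha, hb] at h; simp only [Option.some.injEq] at h
        subst h; simp [ulift, iha _ _ ha, ihb _ _ hb]

theorem unliftD_lift_lt (t : U) : ∀ e d, e ≤ d →
    unliftD e (ulift (d+1) t) = (unliftD e t).map (ulift d) := by
  induction t with
  | var k =>
    intro e d h
    by_cases h2 : k < e
    · have h1 : k < d+1 := by omega
      simp [ulift, unliftD, h1, h2, show k < d by omega]
    · by_cases h3 : k = e
      · have h1 : k < d+1 := by omega
        simp only [ulift, if_pos h1, unliftD, if_neg h2, if_pos h3, Option.map_none]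
      · by_cases h1 : k < d+1
        · simp only [ulift, if_pos h1, unliftD, if_neg h2, if_neg h3, Option.map_some]
          simp only [ulift, if_pos (show k-1 < d by omega)]
        · simp only [ulift, if_neg h1, unliftD, if_neg (show ¬ k+1 < e by omega),
            if_neg (show ¬ k+1 = e by omega), if_neg h2, if_neg h3, Option.map_some]
          simp only [ulift, if_neg (show ¬ k-1 < d by omega)]
          congr 2; omega
  | pi A B ihA ihB =>
    intro e d h
    simp only [ulift, unliftD, ihA _ _ h, ihB (e+1) (d+1) (by omega)]
    cases unliftD e A <;> cases unliftD (e+1) B <;> simp [ulift]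
  | lam t ih =>
    intro e d h
    simp only [ulift, unliftD, ih (e+1) (d+1) (by omega)]
    cases unliftD (e+1) t <;> simp [ulift]
  | app t u iht ihu =>
    intro e d h
    simp only [ulift, unliftD, iht _ _ h, ihu _ _ h]
    cases unliftD e t <;> cases unliftD e u <;> simp [ulift]
  | univ n => intros; rfl
  | bool => intros; rfl
  | zero => intros; rfl
  | one => intros; rfl
  | brc a b iha ihb =>
    intro e d h
    simp only [ulift, unliftD, iha _ _ h, ihb _ _ h]
    cases unliftD e a <;> cases unliftD e b <;> simp [ulift]

def etaBody : U → Option U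
  | app f (var 0) => unliftD 0 f
  | _ => none

theorem etaBody_eq (r : U) : etaBody (app (ulift 0 r) (var 0)) = some r := by
  simp [etaBody, unliftD_lift]

theorem etaBody_some {b s : U} (h : etaBody b = some s) : b = app (ulift 0 s) (var 0) := by
  match b, h with
  | app f (var 0), h =>
    have := unliftD_some f 0 s h
    rw [this]

theorem etaBody_lift (b : U) (d : Nat) :
    etaBody (ulift (d+1) b) = (etaBody b).map (ulift d) := by
  match b with
  | app f (var 0) =>
    simp only [ulift, show (0:Nat) < d+1 by omega, if_pos]
    simp only [etaBody]
    exact unliftD_lift_lt f 0 d (Nat.zero_le d)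
  | app f (var (k+1)) =>
    by_cases h : k+1 < d+1 <;> simp [ulift, etaBody, h]
  | app f (pi A B) => simp [ulift, etaBody]
  | app f (lam t) => simp [ulift, etaBody]
  | app f (app a c) => simp [ulift, etaBody]
  | app f (univ n) => simp [ulift, etaBody]
  | app f bool => simp [ulift, etaBody]
  | app f zero => simp [ulift, etaBody]
  | app f one => simp [ulift, etaBody]
  | app f (brc a c) => simp [ulift, etaBody]
  | var k => by_cases h : k < d+1 <;> simp [ulift, etaBody, h]
  | pi A B => simp [ulift, etaBody]
  | lam t => simp [ulift, etaBody]
  | univ n => simp [ulift, etaBody]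
  | bool => simp [ulift, etaBody]
  | zero => simp [ulift, etaBody]
  | one => simp [ulift, etaBody]
  | brc a c => simp [ulift, etaBody]

inductive Par : U → U → Prop
  | var (k) : Par (var k) (var k)
  | univ (n) : Par (univ n) (univ n)
  | bool : Par bool bool
  | zero : Par zero zero
  | one : Par one one
  | pi {A A' B B'} : Par A A' → Par B B' → Par (pi A B) (pi A' B')
  | lam {b b'} : Par b b' → Par (lam b) (lam b')
  | app {f f' a a'} : Par f f' → Par a a' → Par (app f a) (app f' a')
  | brc {a a' b b'} : Par a a' → Par b b' → Par (brc a b) (brc a' b')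
  | beta {b b' a a'} : Par b b' → Par a a' → Par (app (lam b) a) (usub 0 a' b')
  | iota0 {a a' b} : Par a a' → Par (app (brc a b) zero) a'
  | iota1 {a b b'} : Par b b' → Par (app (brc a b) one) b'
  | eta {s u} : Par s u → Par (lam (app (ulift 0 s) (var 0))) u

theorem par_refl (t : U) : Par t t := by
  induction t with
  | var k => exact Par.var k
  | pi A B ihA ihB => exact Par.pi ihA ihB
  | lam t ih => exact Par.lam ih
  | app t u iht ihu => exact Par.app iht ihu
  | univ n => exact Par.univ n
  | bool => exact Par.bool
  | zero => exact Par.zero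
  | one => exact Par.one
  | brc a b iha ihb => exact Par.brc iha ihb

theorem par_lift {t u : U} (h : Par t u) : ∀ d, Par (ulift d t) (ulift d u) := by
  induction h with
  | var k => intro d; exact par_refl _
  | univ n => intro d; exact par_refl _
  | bool => intro d; exact par_refl _
  | zero => intro d; exact par_refl _
  | one => intro d; exact par_refl _
  | pi _ _ ihA ihB => intro d; exact Par.pi (ihA d) (ihB (d+1))
  | lam _ ih => intro d; exact Par.lam (ih (d+1))
  | app _ _ ihf iha => intro d; exact Par.app (ihf d) (iha d)
  | brc _ _ iha ihb => intro d; exact Par.brc (iha d) (ihb d)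
  | @beta b b' a a' _ _ ihb iha =>
    intro d
    have : ulift d (usub 0 a' b') = usub 0 (ulift d a') (ulift (d+1) b') := by
      have := lift_sub b' d 0 a'
      simpa using this
    rw [show ulift d (app (lam b) a) = app (lam (ulift (d+1) b)) (ulift d a) from rfl, this]
    exact Par.beta (ihb (d+1)) (iha d)
  | iota0 _ iha => intro d; exact Par.iota0 (iha d)
  | iota1 _ ihb => intro d; exact Par.iota1 (ihb d)
  | @eta s u _ ih =>
    intro d
    have : ulift (d+1) (ulift 0 s) = ulift 0 (ulift d s) := lift_lift s d 0 (Nat.zero_le d)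
    rw [show ulift d (lam (app (ulift 0 s) (var 0)))
        = lam (app (ulift (d+1) (ulift 0 s)) (ulift (d+1) (var 0))) from rfl, this]
    have hv : ulift (d+1) (var 0) = var 0 := by simp [ulift]
    rw [hv]
    exact Par.eta (ih d)

theorem par_shN {t u : U} (h : Par t u) (d : Nat) : Par (shN d t) (shN d u) := by
  induction d with
  | zero => exact h
  | succ d ih => rw [shN_succ, shN_succ]; exact par_lift ih 0

theorem par_sub {t t' : U} (h : Par t t') :
    ∀ d {u u'}, Par u u' → Par (usub d u t) (usub d u' t') := by
  induction h with
  | var k =>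
    intro d u u' hu
    by_cases h1 : k < d
    · simp only [usub, if_pos h1]; exact par_refl _
    · by_cases h2 : k = d
      · simp only [usub, if_neg h1, if_pos h2]; exact par_shN hu d
      · simp only [usub, if_neg h1, if_neg h2]; exact par_refl _
  | univ n => intro d u u' hu; exact par_refl _
  | bool => intro d u u' hu; exact par_refl _
  | zero => intro d u u' hu; exact par_refl _
  | one => intro d u u' hu; exact par_refl _
  | pi _ _ ihA ihB => intro d u u' hu; exact Par.pi (ihA d hu) (ihB (d+1) hu)
  | lam _ ih => intro d u u' hu; exact Par.lam (ih (d+1) hu)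
  | app _ _ ihf iha => intro d u u' hu; exact Par.app (ihf d hu) (iha d hu)
  | brc _ _ iha ihb => intro d u u' hu; exact Par.brc (iha d hu) (ihb d hu)
  | @beta b b' a a' _ _ ihb iha =>
    intro d u u' hu
    have key : usub d u' (usub 0 a' b') = usub 0 (usub d u' a') (usub (d+1) u' b') := by
      have := sub_sub b' d 0 u' a'
      simpa using this
    rw [show usub d u (app (lam b) a) = app (lam (usub (d+1) u b)) (usub d u a) from rfl, key]
    exact Par.beta (ihb (d+1) hu) (iha d hu)
  | iota0 _ iha => intro d u u' hu; exact Par.iota0 (iha d hu)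
  | iota1 _ ihb => intro d u u' hu; exact Par.iota1 (ihb d hu)
  | @eta s v _ ih =>
    intro d u u' hu
    have key : usub (d+1) u (ulift 0 s) = ulift 0 (usub d u s) :=
      sub_lift s d 0 u (Nat.zero_le d)
    have hv : usub (d+1) u (var 0) = var 0 := by simp [usub]
    rw [show usub d u (lam (app (ulift 0 s) (var 0)))
        = lam (app (usub (d+1) u (ulift 0 s)) (usub (d+1) u (var 0))) from rfl, key, hv]
    exact Par.eta (ih d hu)

end U
end ZNC
namespace ZNC
namespace U

theorem lift_eq_lam {d : Nat} {t b : U} (h : ulift d t = lam b) :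
    ∃ b₀, t = lam b₀ ∧ b = ulift (d+1) b₀ := by
  cases t <;> simp only [ulift] at h
  case var k => split_ifs at h <;> simp at h
  case lam b₀ => exact ⟨b₀, rfl, (lam.inj h).symm⟩
  all_goals simp at h

theorem lift_eq_app {d : Nat} {t f a : U} (h : ulift d t = app f a) :
    ∃ f₀ a₀, t = app f₀ a₀ ∧ f = ulift d f₀ ∧ a = ulift d a₀ := by
  cases t <;> simp only [ulift] at h
  case var k => split_ifs at h <;> simp at h
  case app f₀ a₀ =>
    obtain ⟨h1, h2⟩ := app.inj h
    exact ⟨f₀, a₀, rfl, h1.symm, h2.symm⟩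
  all_goals simp at h

theorem lift_eq_brc {d : Nat} {t p q : U} (h : ulift d t = brc p q) :
    ∃ p₀ q₀, t = brc p₀ q₀ ∧ p = ulift d p₀ ∧ q = ulift d q₀ := by
  cases t <;> simp only [ulift] at h
  case var k => split_ifs at h <;> simp at h
  case brc p₀ q₀ =>
    obtain ⟨h1, h2⟩ := brc.inj h
    exact ⟨p₀, q₀, rfl, h1.symm, h2.symm⟩
  all_goals simp at h

theorem lift_eq_zero {d : Nat} {t : U} (h : ulift d t = zero) : t = zero := by
  cases t <;> simp only [ulift] at h
  case var k => split_ifs at h <;> simp at h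
  case zero => rfl
  all_goals simp at h

theorem lift_eq_one {d : Nat} {t : U} (h : ulift d t = one) : t = one := by
  cases t <;> simp only [ulift] at h
  case var k => split_ifs at h <;> simp at h
  case one => rfl
  all_goals simp at h

theorem par_lift_inv {s u : U} (h : Par s u) :
    ∀ {t : U} (d : Nat), s = ulift d t → ∃ t', u = ulift d t' ∧ Par t t' := by
  induction h with
  | var k => exact fun d h => ⟨_, h, par_refl _⟩
  | univ n => exact fun d h => ⟨_, h, par_refl _⟩
  | bool => exact fun d h => ⟨_, h, par_refl _⟩
  | zero => exact fun d h => ⟨_, h, par_refl _⟩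
  | one => exact fun d h => ⟨_, h, par_refl _⟩
  | @pi A A' B B' _ _ ihA ihB =>
    intro t d h
    obtain ⟨A₀, B₀, rfl, hA, hB⟩ : ∃ A₀ B₀, t = pi A₀ B₀ ∧ A = ulift d A₀ ∧ B = ulift (d+1) B₀ := by
      cases t <;> simp only [ulift] at h
      case var k => split_ifs at h <;> simp at h
      case pi A₀ B₀ =>
        obtain ⟨h1, h2⟩ := pi.inj h.symm
        exact ⟨A₀, B₀, rfl, h1.symm, h2.symm⟩
      all_goals simp at h
    obtain ⟨A₁, rfl, hA₁⟩ := ihA d hA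
    obtain ⟨B₁, rfl, hB₁⟩ := ihB (d+1) hB
    exact ⟨pi A₁ B₁, rfl, Par.pi hA₁ hB₁⟩
  | @lam b b' _ ih =>
    intro t d h
    obtain ⟨b₀, rfl, hb⟩ := lift_eq_lam h.symm
    obtain ⟨b₁, rfl, hb₁⟩ := ih (d+1) hb
    exact ⟨lam b₁, rfl, Par.lam hb₁⟩
  | @app f f' a a' _ _ ihf iha =>
    intro t d h
    obtain ⟨f₀, a₀, rfl, hf, ha⟩ := lift_eq_app h.symm
    obtain ⟨f₁, rfl, hf₁⟩ := ihf d hf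
    obtain ⟨a₁, rfl, ha₁⟩ := iha d ha
    exact ⟨app f₁ a₁, rfl, Par.app hf₁ ha₁⟩
  | @brc a a' b b' _ _ iha ihb =>
    intro t d h
    obtain ⟨a₀, b₀, rfl, ha, hb⟩ := lift_eq_brc h.symm
    obtain ⟨a₁, rfl, ha₁⟩ := iha d ha
    obtain ⟨b₁, rfl, hb₁⟩ := ihb d hb
    exact ⟨brc a₁ b₁, rfl, Par.brc ha₁ hb₁⟩
  | @beta b b' a a' _ _ ihb iha =>
    intro t d h
    obtain ⟨f₀, a₀, rfl, hf, ha⟩ := lift_eq_app h.symm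
    obtain ⟨b₀, rfl, hb⟩ := lift_eq_lam hf.symm
    obtain ⟨b₁, rfl, hb₁⟩ := ihb (d+1) hb
    obtain ⟨a₁, rfl, ha₁⟩ := iha d ha
    refine ⟨usub 0 a₁ b₁, ?_, Par.beta hb₁ ha₁⟩
    have := lift_sub b₁ d 0 a₁
    simpa using this.symm
  | @iota0 a a' b _ iha =>
    intro t d h
    obtain ⟨f₀, z₀, rfl, hf, hz⟩ := lift_eq_app h.symm
    obtain ⟨p₀, q₀, rfl, hp, hq⟩ := lift_eq_brc hf.symm
    have hz0 := lift_eq_zero hz.symm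
    subst hz0
    obtain ⟨a₁, rfl, ha₁⟩ := iha d hp
    exact ⟨a₁, rfl, Par.iota0 ha₁⟩
  | @iota1 a b b' _ ihb =>
    intro t d h
    obtain ⟨f₀, z₀, rfl, hf, hz⟩ := lift_eq_app h.symm
    obtain ⟨p₀, q₀, rfl, hp, hq⟩ := lift_eq_brc hf.symm
    have hz0 := lift_eq_one hz.symm
    subst hz0
    obtain ⟨b₁, rfl, hb₁⟩ := ihb d hq
    exact ⟨b₁, rfl, Par.iota1 hb₁⟩
  | @eta s v _ ih =>
    intro t d h
    obtain ⟨b₀, rfl, hb⟩ := lift_eq_lam h.symm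
    -- hb : app (ulift 0 s) (var 0) = ulift (d+1) b₀
    have hEta : (etaBody b₀).map (ulift d) = some s := by
      rw [← etaBody_lift, ← hb, etaBody_eq]
    obtain ⟨m, hm, hms⟩ : ∃ m, etaBody b₀ = some m ∧ ulift d m = s := by
      cases hmm : etaBody b₀ with
      | none => rw [hmm] at hEta; simp at hEta
      | some m => rw [hmm] at hEta; simp at hEta; exact ⟨m, rfl, hEta⟩
    obtain ⟨v₁, rfl, hv₁⟩ := ih d hms.symm
    refine ⟨v₁, rfl, ?_⟩
    rw [etaBody_some hm]
    exact Par.eta hv₁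

end U
end ZNC
namespace ZNC
namespace U

theorem etaBody_size {b s : U} (h : etaBody b = some s) : usize s + 2 = usize b := by
  rw [etaBody_some h]
  simp [usize, usize_lift]

def tak : U → U
  | var k => var k
  | univ n => univ n
  | bool => bool
  | zero => zero
  | one => one
  | pi A B => pi (tak A) (tak B)
  | brc a b => brc (tak a) (tak b)
  | lam b =>
    match h : etaBody b with
    | some s => tak s
    | none => lam (tak b)
  | app (lam b) a => usub 0 (tak a) (tak b)
  | app (brc p q) zero => tak p
  | app (brc p q) one => tak q
  | app f a => app (tak f) (tak a)
termination_by t => usize t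
decreasing_by
  all_goals simp only [usize]
  all_goals try omega
  have := etaBody_size h
  omega

end U
end ZNC
namespace ZNC
namespace U

@[simp] theorem tak_var (k : Nat) : tak (var k) = var k := by simp [tak]
@[simp] theorem tak_univ (n : Nat) : tak (univ n) = univ n := by simp [tak]
@[simp] theorem tak_bool : tak bool = bool := by simp [tak]
@[simp] theorem tak_zero : tak zero = zero := by simp [tak]
@[simp] theorem tak_one : tak one = one := by simp [tak]
@[simp] theorem tak_pi (A B : U) : tak (pi A B) = pi (tak A) (tak B) := by simp [tak]
@[simp] theorem tak_brc (a b : U) : tak (brc a b) = brc (tak a) (tak b) := by simp [tak]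

theorem tak_lam_eta {b s : U} (h : etaBody b = some s) : tak (lam b) = tak s := by
  rw [tak, h]

theorem tak_lam_ne {b : U} (h : etaBody b = none) : tak (lam b) = lam (tak b) := by
  rw [tak, h]

@[simp] theorem tak_beta (b a : U) : tak (app (lam b) a) = usub 0 (tak a) (tak b) := by
  rw [tak]

@[simp] theorem tak_iota0 (p q : U) : tak (app (brc p q) zero) = tak p := by rw [tak]
@[simp] theorem tak_iota1 (p q : U) : tak (app (brc p q) one) = tak q := by rw [tak]

theorem tak_app_other {f a : U} (h1 : ∀ b, f ≠ lam b)
    (h2 : (∀ p q, f ≠ brc p q) ∨ (a ≠ zero ∧ a ≠ one)) :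
    tak (app f a) = app (tak f) (tak a) := by
  cases f with
  | lam b => exact absurd rfl (h1 b)
  | brc p q =>
    rcases h2 with h2 | ⟨hz, ho⟩
    · exact absurd rfl (h2 p q)
    · cases a <;> first | (exact absurd rfl hz) | (exact absurd rfl ho) | rw [tak.eq_def]
  | var k => rw [tak.eq_def]
  | pi A B => rw [tak.eq_def]
  | app g c => rw [tak.eq_def]
  | univ n => rw [tak.eq_def]
  | bool => rw [tak.eq_def]
  | zero => rw [tak.eq_def]
  | one => rw [tak.eq_def]

end U
end ZNC
namespace ZNC
namespace U

theorem lift_ne_lam {d : Nat} {f : U} (h : ∀ b, f ≠ lam b) : ∀ b, ulift d f ≠ lam b := by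
  intro b hb
  obtain ⟨b₀, hb₀, _⟩ := lift_eq_lam hb
  exact h b₀ hb₀

theorem lift_ne_brc {d : Nat} {f : U} (h : ∀ p q, f ≠ brc p q) : ∀ p q, ulift d f ≠ brc p q := by
  intro p q hb
  obtain ⟨p₀, q₀, hb₀, _, _⟩ := lift_eq_brc hb
  exact h p₀ q₀ hb₀

theorem tak_ulift : ∀ (n : Nat) (t : U), usize t ≤ n → ∀ d, tak (ulift d t) = ulift d (tak t) := by
  intro n
  induction n with
  | zero => intro t h; exact absurd h (by have := usize_pos t; omega)
  | succ n ih =>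
    intro t ht d
    have hpos := usize_pos
    cases t with
    | var k => by_cases h : k < d <;> simp [ulift, h]
    | univ m => simp [ulift]
    | bool => simp [ulift]
    | zero => simp [ulift]
    | one => simp [ulift]
    | pi A B =>
      simp only [usize] at ht
      simp only [ulift, tak_pi]
      rw [ih A (by have := hpos B; omega) d, ih B (by have := hpos A; omega) (d+1)]
    | brc a b =>
      simp only [usize] at ht
      simp only [ulift, tak_brc]
      rw [ih a (by have := hpos b; omega) d, ih b (by have := hpos a; omega) d]
    | lam b =>
      simp only [usize] at ht
      cases hb : etaBody b with
      | some s =>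
        have hlift : etaBody (ulift (d+1) b) = some (ulift d s) := by
          rw [etaBody_lift, hb]; rfl
        rw [show ulift d (lam b) = lam (ulift (d+1) b) from rfl,
          tak_lam_eta hlift, tak_lam_eta hb]
        have hs := etaBody_size hb
        exact ih s (by omega) d
      | none =>
        have hlift : etaBody (ulift (d+1) b) = none := by
          rw [etaBody_lift, hb]; rfl
        rw [show ulift d (lam b) = lam (ulift (d+1) b) from rfl,
          tak_lam_ne hlift, tak_lam_ne hb]
        rw [show ulift d (lam (tak b)) = lam (ulift (d+1) (tak b)) from rfl,
          ih b (by omega) (d+1)]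
    | app f a =>
      simp only [usize] at ht
      by_cases hflam : ∃ b, f = lam b
      · obtain ⟨b, rfl⟩ := hflam
        simp only [usize] at ht
        rw [show ulift d (app (lam b) a) = app (lam (ulift (d+1) b)) (ulift d a) from rfl,
          tak_beta, tak_beta, ih a (by have := hpos b; omega) d,
          ih b (by have := hpos a; omega) (d+1)]
        have := lift_sub (tak b) d 0 (tak a)
        simpa using this.symm
      · by_cases hfbrc : ∃ p q, f = brc p q
        · obtain ⟨p, q, rfl⟩ := hfbrc
          simp only [usize] at ht
          by_cases hz : a = zero
          · subst hz
            rw [show ulift d (app (brc p q) zero)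
                = app (brc (ulift d p) (ulift d q)) zero from rfl, tak_iota0, tak_iota0]
            exact ih p (by have := hpos q; omega) d
          · by_cases ho : a = one
            · subst ho
              rw [show ulift d (app (brc p q) one)
                  = app (brc (ulift d p) (ulift d q)) one from rfl, tak_iota1, tak_iota1]
              exact ih q (by have := hpos p; omega) d
            · have hz' : ulift d a ≠ zero := fun h => hz (lift_eq_zero h)
              have ho' : ulift d a ≠ one := fun h => ho (lift_eq_one h)
              rw [show ulift d (app (brc p q) a)
                  = app (brc (ulift d p) (ulift d q)) (ulift d a) from rfl,
                tak_app_other (by intro b h; exact absurd h (by simp)) (Or.inr ⟨hz', ho'⟩),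
                tak_app_other (by intro b h; exact absurd h (by simp)) (Or.inr ⟨hz, ho⟩),
                tak_brc]
              rw [tak_brc p q]
              rw [show ulift d (app (brc (tak p) (tak q)) (tak a))
                  = app (brc (ulift d (tak p)) (ulift d (tak q))) (ulift d (tak a)) from rfl]
              rw [ih p (by have := hpos q; have := hpos a; omega) d,
                ih q (by have := hpos p; have := hpos a; omega) d,
                ih a (by have := hpos p; have := hpos q; omega) d]
        · have h1 : ∀ b, f ≠ lam b := fun b h => hflam ⟨b, h⟩
          have h2 : ∀ p q, f ≠ brc p q := fun p q h => hfbrc ⟨p, q, h⟩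
          rw [show ulift d (app f a) = app (ulift d f) (ulift d a) from rfl,
            tak_app_other (lift_ne_lam h1) (Or.inl (lift_ne_brc h2)),
            tak_app_other h1 (Or.inl h2)]
          rw [show ulift d (app (tak f) (tak a)) = app (ulift d (tak f)) (ulift d (tak a)) from rfl]
          rw [ih f (by have := hpos a; omega) d, ih a (by have := hpos f; omega) d]

theorem tak_lift {t : U} (d : Nat) : tak (ulift d t) = ulift d (tak t) :=
  tak_ulift (usize t) t le_rfl d

end U
end ZNC
namespace ZNC
namespace U

theorem par_var_inv {k : Nat} {u : U} (h : Par (var k) u) : u = var k := by cases h; rfl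

theorem par_zero_inv {u : U} (h : Par zero u) : u = zero := by cases h; rfl

theorem par_one_inv {u : U} (h : Par one u) : u = one := by cases h; rfl

theorem par_brc_inv {p q u : U} (h : Par (brc p q) u) :
    ∃ p' q', u = brc p' q' ∧ Par p p' ∧ Par q q' := by
  cases h with
  | brc hp hq => exact ⟨_, _, rfl, hp, hq⟩

theorem usub0_var0 (z : U) : usub 0 z (var 0) = z := by
  simp [usub, shN_zero]

/-- `tak` of an η-β overlap, non-`brc` head. -/
theorem tak_eta_app (r a : U) (h : ∀ p q, r ≠ brc p q) :
    tak (app (lam (app (ulift 0 r) (var 0))) a) = tak (app r a) := by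
  rw [tak_beta]
  by_cases hrl : ∃ c, r = lam c
  · obtain ⟨c, rfl⟩ := hrl
    rw [show ulift 0 (lam c) = lam (ulift 1 c) from rfl, tak_beta, tak_var, tak_lift,
      show (1:Nat) = 0+1 from rfl, sub_var0_lift, tak_beta]
  · have h1 : ∀ c, r ≠ lam c := fun c hc => hrl ⟨c, hc⟩
    rw [tak_app_other (lift_ne_lam h1) (Or.inr ⟨by simp, by simp⟩), tak_var, tak_lift]
    rw [show usub 0 (tak a) (app (ulift 0 (tak r)) (var 0))
        = app (usub 0 (tak a) (ulift 0 (tak r))) (usub 0 (tak a) (var 0)) from rfl,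
      sub_lift_cancel, usub0_var0, tak_app_other h1 (Or.inl h)]

/-- `tak` of an η-β overlap with a `brc` head. -/
theorem tak_eta_app_brc (p q a : U) :
    tak (app (lam (app (ulift 0 (brc p q)) (var 0))) a)
      = app (brc (tak p) (tak q)) (tak a) := by
  rw [tak_beta, show ulift 0 (brc p q) = brc (ulift 0 p) (ulift 0 q) from rfl,
    tak_app_other (by intro b hb; exact absurd hb (by simp)) (Or.inr ⟨by simp, by simp⟩),
    tak_brc, tak_var, tak_lift, tak_lift]
  rw [show usub 0 (tak a) (app (brc (ulift 0 (tak p)) (ulift 0 (tak q))) (var 0))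
      = app (brc (usub 0 (tak a) (ulift 0 (tak p))) (usub 0 (tak a) (ulift 0 (tak q))))
          (usub 0 (tak a) (var 0)) from rfl,
    sub_lift_cancel, sub_lift_cancel, usub0_var0]

theorem tak_main : ∀ (n : Nat) {t u : U}, usize t ≤ n → Par t u → Par u (tak t) := by
  intro n
  induction n with
  | zero => intro t u h; exact absurd h (by have := usize_pos t; omega)
  | succ n ih =>
    intro t u ht h
    have hpos := usize_pos
    cases h with
    | var k => rw [tak_var]; exact par_refl _
    | univ m => rw [tak_univ]; exact par_refl _
    | bool => rw [tak_bool]; exact par_refl _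
    | zero => rw [tak_zero]; exact par_refl _
    | one => rw [tak_one]; exact par_refl _
    | @pi A A' B B' hA hB =>
      simp only [usize] at ht
      rw [tak_pi]
      exact Par.pi (ih (by have := hpos B; omega) hA) (ih (by have := hpos A; omega) hB)
    | @brc a a' b b' ha hb =>
      simp only [usize] at ht
      rw [tak_brc]
      exact Par.brc (ih (by have := hpos b; omega) ha) (ih (by have := hpos a; omega) hb)
    | @beta b b' a a' hb ha =>
      simp only [usize] at ht
      rw [tak_beta]
      exact par_sub (ih (by have := hpos a; omega) hb) 0
        (ih (by have := hpos b; omega) ha)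
    | @iota0 a a' b ha =>
      simp only [usize] at ht
      rw [tak_iota0]
      exact ih (by have := hpos b; omega) ha
    | @iota1 a b b' hb =>
      simp only [usize] at ht
      rw [tak_iota1]
      exact ih (by have := hpos a; omega) hb
    | @eta s v hs =>
      simp only [usize, usize_lift] at ht
      rw [tak_lam_eta (etaBody_eq s)]
      exact ih (by omega) hs
    | @lam b b' hb =>
      simp only [usize] at ht
      cases hsb : etaBody b with
      | none => rw [tak_lam_ne hsb]; exact Par.lam (ih (by omega) hb)
      | some s =>
        have hbs := etaBody_some hsb
        subst hbs
        simp only [usize, usize_lift] at ht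
        rw [tak_lam_eta hsb]
        obtain ⟨g, hg⟩ : ∃ g, g = ulift 0 s := ⟨_, rfl⟩
        rw [← hg] at hb
        cases hb with
        | @app _ g' w w' hg' hw =>
          have hw' := par_var_inv hw
          subst hw'
          obtain ⟨s₁, rfl, hs₁⟩ := par_lift_inv hg' 0 hg
          exact Par.eta (ih (by omega) hs₁)
        | @beta c c' w w' hc hw =>
          have hw' := par_var_inv hw
          subst hw'
          obtain ⟨c₀, rfl, hc₀⟩ := lift_eq_lam hg.symm
          obtain ⟨c₁, rfl, hc₁⟩ := par_lift_inv hc 1 hc₀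
          rw [show (1:Nat) = 0+1 from rfl, sub_var0_lift]
          have : Par (lam c₀) (lam c₁) := Par.lam hc₁
          have hsz : usize (lam c₀) ≤ n := by simp only [usize] at ht ⊢; omega
          exact ih hsz this
    | @app f f' a a' hf ha =>
      simp only [usize] at ht
      by_cases hflam : ∃ b, f = lam b
      · obtain ⟨b, rfl⟩ := hflam
        simp only [usize] at ht
        cases hf with
        | @lam _ b'' hb'' =>
          rw [tak_beta]
          exact Par.beta (ih (by have := hpos a; omega) hb'')
            (ih (by have := hpos b; omega) ha)
        | @eta r _ hr =>
          simp only [usize, usize_lift] at ht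
          by_cases hrb : ∃ p q, r = brc p q
          · obtain ⟨p, q, rfl⟩ := hrb
            simp only [usize] at ht
            rw [tak_eta_app_brc]
            obtain ⟨p', q', rfl, hp, hq⟩ := par_brc_inv hr
            exact Par.app
              (Par.brc (ih (by have := hpos q; have := hpos a; omega) hp)
                (ih (by have := hpos p; have := hpos a; omega) hq))
              (ih (by have := hpos p; have := hpos q; omega) ha)
          · rw [tak_eta_app r a (fun p q hpq => hrb ⟨p, q, hpq⟩)]
            exact ih (by simp only [usize]; omega) (Par.app hr ha)
      · by_cases hfbrc : ∃ p q, f = brc p q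
        · obtain ⟨p, q, rfl⟩ := hfbrc
          simp only [usize] at ht
          obtain ⟨p', q', rfl, hp, hq⟩ := par_brc_inv hf
          by_cases hz : a = zero
          · subst hz
            have := par_zero_inv ha
            subst this
            simp only [usize] at ht
            rw [tak_iota0]
            exact Par.iota0 (ih (by have := hpos q; omega) hp)
          · by_cases ho : a = one
            · subst ho
              have := par_one_inv ha
              subst this
              simp only [usize] at ht
              rw [tak_iota1]
              exact Par.iota1 (ih (by have := hpos p; omega) hq)
            · rw [tak_app_other (by intro c hc; exact absurd hc (by simp)) (Or.inr ⟨hz, ho⟩),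
                tak_brc]
              exact Par.app
                (Par.brc (ih (by have := hpos q; have := hpos a; omega) hp)
                  (ih (by have := hpos p; have := hpos a; omega) hq))
                (ih (by have := hpos p; have := hpos q; omega) ha)
        · have h1 : ∀ b, f ≠ lam b := fun b hb => hflam ⟨b, hb⟩
          have h2 : ∀ p q, f ≠ brc p q := fun p q hpq => hfbrc ⟨p, q, hpq⟩
          rw [tak_app_other h1 (Or.inl h2)]
          exact Par.app (ih (by have := hpos a; omega) hf) (ih (by have := hpos f; omega) ha)

end U
end ZNC
namespace ZNC
namespace U

theorem par_diamond {t u v : U} (h1 : Par t u) (h2 : Par t v) : ∃ w, Par u w ∧ Par v w :=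
  ⟨tak t, tak_main (usize t) le_rfl h1, tak_main (usize t) le_rfl h2⟩

/-- Reflexive-transitive closure of parallel reduction. -/
def PStar : U → U → Prop := Relation.ReflTransGen Par

theorem pstar_refl (t : U) : PStar t t := Relation.ReflTransGen.refl

theorem pstar_single {t u : U} (h : Par t u) : PStar t u := Relation.ReflTransGen.single h

theorem par_strip {t u v : U} (h : Par t u) (hs : PStar t v) : ∃ w, PStar u w ∧ Par v w := by
  induction hs with
  | refl => exact ⟨u, pstar_refl u, h⟩
  | tail _ hstep ih =>
    obtain ⟨w, hw1, hw2⟩ := ih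
    obtain ⟨x, hx1, hx2⟩ := par_diamond hstep hw2
    exact ⟨x, hw1.tail hx2, hx1⟩

theorem pstar_confluent {t u v : U} (h1 : PStar t u) (h2 : PStar t v) :
    ∃ w, PStar u w ∧ PStar v w := by
  induction h1 with
  | refl => exact ⟨v, h2, pstar_refl v⟩
  | tail _ hstep ih =>
    obtain ⟨w, hw1, hw2⟩ := ih
    obtain ⟨x, hx1, hx2⟩ := par_strip hstep hw1
    exact ⟨x, hx1, hw2.tail hx2⟩

/-- Conversion: the equivalence relation generated by parallel reduction. -/
inductive UConv : U → U → Prop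
  | par {a b} : Par a b → UConv a b
  | symm {a b} : UConv a b → UConv b a
  | trans {a b c} : UConv a b → UConv b c → UConv a c

theorem uconv_refl (t : U) : UConv t t := .par (par_refl t)

theorem uconv_join {a b : U} (h : UConv a b) : ∃ c, PStar a c ∧ PStar b c := by
  induction h with
  | par h => exact ⟨_, pstar_single h, pstar_refl _⟩
  | symm _ ih => obtain ⟨c, h1, h2⟩ := ih; exact ⟨c, h2, h1⟩
  | trans _ _ ih1 ih2 =>
    obtain ⟨x, hx1, hx2⟩ := ih1
    obtain ⟨y, hy1, hy2⟩ := ih2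
    obtain ⟨z, hz1, hz2⟩ := pstar_confluent hx2 hy1
    exact ⟨z, hx1.trans hz1, hy2.trans hz2⟩

theorem pstar_zero {w : U} (h : PStar zero w) : w = zero := by
  induction h with
  | refl => rfl
  | tail _ hstep ih => subst ih; exact par_zero_inv hstep

theorem pstar_one {w : U} (h : PStar one w) : w = one := by
  induction h with
  | refl => rfl
  | tail _ hstep ih => subst ih; exact par_one_inv hstep

theorem zero_not_uconv_one : ¬ UConv zero one := by
  intro h
  obtain ⟨c, h1, h2⟩ := uconv_join h
  rw [pstar_zero h1] at h2
  have := pstar_one h2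
  -- `this : zero = one`, impossible
  cases this

theorem uconv_map {F : U → U} (hF : ∀ x y, Par x y → Par (F x) (F y))
    {a b : U} (h : UConv a b) : UConv (F a) (F b) := by
  induction h with
  | par h => exact .par (hF _ _ h)
  | symm _ ih => exact .symm ih
  | trans _ _ ih1 ih2 => exact .trans ih1 ih2

theorem uconv_app {f f' a a' : U} (hf : UConv f f') (ha : UConv a a') :
    UConv (app f a) (app f' a') :=
  .trans (uconv_map (fun _ _ h => Par.app h (par_refl a)) hf)
    (uconv_map (fun _ _ h => Par.app (par_refl f') h) ha)

theorem uconv_pi {A A' B B' : U} (hA : UConv A A') (hB : UConv B B') :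
    UConv (pi A B) (pi A' B') :=
  .trans (uconv_map (fun _ _ h => Par.pi h (par_refl B)) hA)
    (uconv_map (fun _ _ h => Par.pi (par_refl A') h) hB)

theorem uconv_brc {p p' q q' : U} (hp : UConv p p') (hq : UConv q q') :
    UConv (brc p q) (brc p' q') :=
  .trans (uconv_map (fun _ _ h => Par.brc h (par_refl q)) hp)
    (uconv_map (fun _ _ h => Par.brc (par_refl p') h) hq)

theorem uconv_lam {b b' : U} (hb : UConv b b') : UConv (lam b) (lam b') :=
  uconv_map (fun _ _ h => Par.lam h) hb

end U
end ZNC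
namespace ZNC
open U

def erase : DTT.Tm → U
  | .var k => .var k
  | .pi A B => .pi (erase A) (erase B)
  | .lam _ t => .lam (erase t)
  | .app t u => .app (erase t) (erase u)
  | .univ n => .univ n
  | .bool => .bool
  | .zero => .zero
  | .one => .one
  | .brec _ a b => .brc (erase a) (erase b)

theorem erase_lift (t : DTT.Tm) : ∀ d, erase (DTT.lift d t) = ulift d (erase t) := by
  induction t with
  | var k => intro d; by_cases h : k < d <;> simp [DTT.lift, erase, ulift, h]
  | pi A B ihA ihB => intro d; simp [DTT.lift, erase, ulift, ihA, ihB]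
  | lam A t ihA iht => intro d; simp [DTT.lift, erase, ulift, iht]
  | app t u iht ihu => intro d; simp [DTT.lift, erase, ulift, iht, ihu]
  | univ n => intro d; rfl
  | bool => intro d; rfl
  | zero => intro d; rfl
  | one => intro d; rfl
  | brec C a b ihC iha ihb => intro d; simp [DTT.lift, erase, ulift, iha, ihb]

theorem erase_shiftN (t : DTT.Tm) : ∀ d, erase (DTT.shiftN d t) = shN d (erase t) := by
  intro d
  induction d with
  | zero => rfl
  | succ d ih =>
    rw [DTT.shiftN, Function.iterate_succ_apply', shN_succ, ← DTT.shiftN, erase_lift, ih]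

theorem erase_subst (t : DTT.Tm) : ∀ d u, erase (DTT.subst d u t) = usub d (erase u) (erase t) := by
  induction t with
  | var k =>
    intro d u
    by_cases h1 : k < d
    · simp [DTT.subst, erase, usub, h1]
    · by_cases h2 : k = d
      · simp [DTT.subst, erase, usub, h1, h2, erase_shiftN]
      · simp [DTT.subst, erase, usub, h1, h2]
  | pi A B ihA ihB => intro d u; simp [DTT.subst, erase, usub, ihA, ihB]
  | lam A t ihA iht => intro d u; simp [DTT.subst, erase, usub, iht]
  | app t v iht ihv => intro d u; simp [DTT.subst, erase, usub, iht, ihv]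
  | univ n => intro d u; rfl
  | bool => intro d u; rfl
  | zero => intro d u; rfl
  | one => intro d u; rfl
  | brec C a b ihC iha ihb => intro d u; simp [DTT.subst, erase, usub, iha, ihb]

theorem conv_sound {Γ : DTT.Ctx} {t u A : DTT.Tm} (h : DTT.Conv Γ t u A) :
    UConv (erase t) (erase u) := by
  refine DTT.Conv.rec (motive_1 := fun _ _ => True) (motive_2 := fun _ _ _ _ => True)
    (motive_3 := fun _ t u _ _ => UConv (erase t) (erase u))
    ?_ ?_ ?_ ?_ ?_ ?_ ?_ ?_ ?_ ?_ ?_ ?_ ?_ ?_ ?_ ?_ ?_ ?_ ?_ ?_ ?_ ?_ ?_ ?_ ?_ ?_ h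
  all_goals try (intros; exact True.intro)
  -- refl
  · intros; exact uconv_refl _
  -- euclid
  · intros
    rename_i ih1 ih2
    exact ih1.trans ih2.symm
  -- convTy
  · intros
    rename_i ih1 ih2
    exact ih1
  -- cumul
  · intros
    rename_i ih
    exact ih
  -- piCong
  · intros
    rename_i ih1 ih2
    exact uconv_pi ih1 ih2
  -- lamCong
  · intros
    rename_i ih1 ih2
    exact uconv_lam ih2
  -- appLeft
  · intros
    rename_i ih1 ih2
    exact uconv_app ih1 (uconv_refl _)
  -- appRight
  · intros
    rename_i ih1 ih2
    exact uconv_app (uconv_refl _) ih2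
  -- beta
  · intros
    simp only [erase, DTT.subst0, erase_subst]
    exact .par (Par.beta (par_refl _) (par_refl _))
  -- eta
  · intros
    rename_i ih1 ih2 ih3
    simp only [erase, erase_lift] at ih3
    exact (UConv.symm (.par (Par.eta (par_refl _)))).trans
      ((uconv_lam ih3).trans (.par (Par.eta (par_refl _))))
  -- brecCong
  · intros
    rename_i ih1 ih2 ih3
    exact uconv_brc ih2 ih3
  -- brecZero
  · intros
    exact .par (Par.iota0 (par_refl _))
  -- brecOne
  · intros
    exact .par (Par.iota1 (par_refl _))

end ZNC

open DTT in
/-- **Consistency of conversion**: `() ⊢ 0 conv 1 : N₂` is not derivable. -/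
theorem zero_not_conv_one : ¬ Conv [] .zero .one .bool := by
  intro h
  exact ZNC.U.zero_not_uconv_one (ZNC.conv_sound h)
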